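/- arXiv:math/0509304 — 5 statements merged into one kernel-verified Lean document; each statement's English description precedes it below -/
import Mathlib

section
/- Let $M$ be a sparse closed subgroup of a profinite group $F$. Then for each open subgroup $H$ of $F$ containing $M$ and for all $m, n \in \mathbb{N}$ there exists an open subgroup $K$ of $H$ containing $M$ such that $(F:K) \geq m$ and $(K:L) \geq n$ for every proper open subgroup $L$ of $K$ containing $M$. -/
/-- A closed subgroup `M` of a profinite group `F` is sparse if for all `m n : ℕ` there is
an open subgroup `K ≥ M` of index at least `m` such that every proper open subgroup of `K`
containing `M` has index at least `n` in `K`. -/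
def IsSparse {F : Type*} [Group F] [TopologicalSpace F] (M : Subgroup F) : Prop :=
  ∀ m n : ℕ, ∃ K : Subgroup F, IsOpen (K : Set F) ∧ M ≤ K ∧ m ≤ K.index ∧
    ∀ L : Subgroup F, IsOpen (L : Set F) → M ≤ L → L < K → n ≤ L.relIndex K

/-- Lemma 2.2 (Improvement Lemma): if `M` is a sparse closed subgroup of a profinite group
`F`, then for each open subgroup `H ≥ M` and all `m, n` there is an open subgroup `K` of
`H` containing `M` with `(F : K) ≥ m` and `(K : L) ≥ n` for every proper open subgroup
`L < K` containing `M`. -/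
theorem improvement_lemma (F : Type*) [Group F] [TopologicalSpace F] [IsTopologicalGroup F]
    [CompactSpace F] [T2Space F] [TotallyDisconnectedSpace F]
    (M : Subgroup F) (hMclosed : IsClosed (M : Set F)) (hMsparse : IsSparse M)
    (H : Subgroup F) (hHopen : IsOpen (H : Set F)) (hMH : M ≤ H) (m n : ℕ) :
    ∃ K : Subgroup F, IsOpen (K : Set F) ∧ M ≤ K ∧ K ≤ H ∧ m ≤ K.index ∧
      ∀ L : Subgroup F, IsOpen (L : Set F) → M ≤ L → L < K → n ≤ L.relIndex K := by
  -- H has finite index since it is open and F is compact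
  have hHfin : H.index ≠ 0 := by
    have : Finite (F ⧸ H) := H.quotient_finite_of_isOpen hHopen
    exact Subgroup.index_ne_zero_of_finite
  obtain ⟨K, hKopen, hMK, hmK, hL⟩ := hMsparse m (max n (H.index + 1))
  have hKH : K ≤ H := by
    by_contra hKH
    have hlt : K ⊓ H < K := lt_of_le_of_ne inf_le_left (fun h => hKH (h ▸ inf_le_right))
    have h1 : max n (H.index + 1) ≤ (K ⊓ H).relIndex K :=
      hL (K ⊓ H) (IsOpen.inter hKopen hHopen) (le_inf hMK hMH) hlt
    have h2 : (K ⊓ H).relIndex K = H.relIndex K := by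
      rw [inf_comm, Subgroup.inf_relIndex_right]
    have h3 : H.relIndex K ≤ H.index := by
      have := Subgroup.relIndex_le_of_le_right (H := H) (K := K) le_top
        (by rwa [Subgroup.relIndex_top_right])
      rwa [Subgroup.relIndex_top_right] at this
    have : H.index + 1 ≤ H.index := le_trans (le_max_right _ _) (le_trans (h2 ▸ h1) h3)
    omega
  exact ⟨K, hKopen, hMK, hKH, hmK, fun L hLo hML hLK =>
    le_trans (le_max_left _ _) (hL L hLo hML hLK)⟩
end

section
/- Let $M \leq H \leq F$ be profinite groups with $M$ a closed subgroup and $H$ an open subgroup of $F$. Then $M$ is sparse in $F$ if and only if $M$ is sparse in $H$. -/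
open Subgroup

/-- Corollary 2.3: for `M ≤ H ≤ F` with `M` closed and `H` open, `M` is sparse in `F`
if and only if `M` (viewed as a subgroup of `H`) is sparse in `H`. -/
theorem sparse_iff_sparse_in_open_subgroup (F : Type*) [Group F] [TopologicalSpace F]
    [IsTopologicalGroup F] [CompactSpace F] [T2Space F] [TotallyDisconnectedSpace F]
    (M H : Subgroup F) (hMclosed : IsClosed (M : Set F)) (hHopen : IsOpen (H : Set F))
    (hMH : M ≤ H) :
    IsSparse M ↔ IsSparse (M.subgroupOf H) := by
  have hHfin : H.index ≠ 0 := by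
    have := H.quotient_finite_of_isOpen hHopen
    exact H.index_ne_zero_of_finite
  constructor
  · -- sparse in F → sparse in H
    intro hS m n
    obtain ⟨K, hKopen, hMK, hKind, hKmin⟩ := hS (m * H.index) (max n (H.index + 1))
    -- K ≤ H
    have hKH : K ≤ H := by
      by_contra hnot
      have hlt : K ⊓ H < K := by
        refine lt_of_le_of_ne inf_le_left fun h => hnot ?_
        rw [← h]; exact inf_le_right
      have hopen : IsOpen ((K ⊓ H : Subgroup F) : Set F) := by
        rw [Subgroup.coe_inf]; exact hKopen.inter hHopen
      have h1 := hKmin (K ⊓ H) hopen (le_inf hMK hMH) hlt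
      have h2 : (K ⊓ H).relIndex K = H.relIndex K := by
        rw [inf_comm, inf_relIndex_right]
      have h3 : H.relIndex K ≤ H.index := by
        have := Subgroup.relIndex_le_of_le_right (le_top : K ≤ ⊤)
          (by rwa [Subgroup.relIndex_top_right] : H.relIndex ⊤ ≠ 0)
        rwa [Subgroup.relIndex_top_right] at this
      have h4 : H.index + 1 ≤ H.relIndex K := le_trans (le_max_right _ _) (h2 ▸ h1)
      omega
    refine ⟨K.subgroupOf H, ?_, fun x hx => hMK hx, ?_, ?_⟩
    · rw [Subgroup.coe_subgroupOf]
      exact hKopen.preimage (continuous_subtype_val.comp continuous_id)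
    · have hrel : K.relIndex H * H.index = K.index := Subgroup.relIndex_mul_index hKH
      have : m * H.index ≤ K.relIndex H * H.index := by rw [hrel]; exact hKind
      have hind : m ≤ K.relIndex H :=
        Nat.le_of_mul_le_mul_right this (Nat.pos_of_ne_zero hHfin)
      exact hind
    · intro L' hL'open hML' hL'lt
      set L : Subgroup F := L'.map H.subtype with hLdef
      have hLopen : IsOpen (L : Set F) := by
        rw [hLdef, Subgroup.coe_map]
        exact hHopen.isOpenMap_subtype_val _ hL'open
      have hML : M ≤ L := by
        intro x hx
        exact ⟨⟨x, hMH hx⟩, hML' hx, rfl⟩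
      have hLsub : L.subgroupOf H = L' :=
        Subgroup.comap_map_eq_self_of_injective H.subtype_injective L'
      have hLK : L < K := by
        have hle : L ≤ K := by
          rintro x ⟨y, hy, rfl⟩
          exact Subgroup.mem_subgroupOf.mp (le_of_lt hL'lt hy)
        refine lt_of_le_of_ne hle fun h => ?_
        apply absurd hL'lt
        rw [← hLsub, h]
        exact lt_irrefl _
      have h1 := hKmin L hLopen hML hLK
      have h2 : L'.relIndex (K.subgroupOf H) = L.relIndex K := by
        rw [← hLsub]
        exact Subgroup.relIndex_subgroupOf hKH
      rw [h2]
      exact le_trans (le_max_left _ _) h1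
  · -- sparse in H → sparse in F
    intro hS m n
    obtain ⟨K', hK'open, hMK', hK'ind, hK'min⟩ := hS m n
    set K : Subgroup F := K'.map H.subtype with hKdef
    have hKH : K ≤ H := by
      rintro x ⟨y, _, rfl⟩; exact y.2
    have hKsub : K.subgroupOf H = K' :=
      Subgroup.comap_map_eq_self_of_injective H.subtype_injective K'
    refine ⟨K, ?_, ?_, ?_, ?_⟩
    · rw [hKdef, Subgroup.coe_map]
      exact hHopen.isOpenMap_subtype_val _ hK'open
    · intro x hx
      exact ⟨⟨x, hMH hx⟩, hMK' hx, rfl⟩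
    · rw [hKdef, Subgroup.index_map_subtype]
      calc m ≤ K'.index := hK'ind
        _ ≤ K'.index * H.index := Nat.le_mul_of_pos_right _ (Nat.pos_of_ne_zero hHfin)
    · intro L hLopen hML hLK
      have hLH : L ≤ H := le_trans (le_of_lt hLK) hKH
      have hL'lt : L.subgroupOf H < K' := by
        rw [← hKsub]
        refine lt_of_le_of_ne (Subgroup.comap_mono (le_of_lt hLK)) fun h => ?_
        have : L = K := by
          have h1 : (L.subgroupOf H).map H.subtype = (K.subgroupOf H).map H.subtype := by
            rw [h]
          rwa [Subgroup.subgroupOf_map_subtype, Subgroup.subgroupOf_map_subtype,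
            inf_eq_left.mpr hLH, inf_eq_left.mpr hKH] at h1
        exact absurd hLK (this ▸ lt_irrefl _)
      have h1 := hK'min (L.subgroupOf H) (by
        rw [Subgroup.coe_subgroupOf]
        exact hLopen.preimage continuous_subtype_val) (fun x hx => hML hx) hL'lt
      have h2 : (L.subgroupOf H).relIndex K' = L.relIndex K := by
        rw [← hKsub]
        exact Subgroup.relIndex_subgroupOf hKH
      rw [← h2]
      exact h1
end

section
/- Let $M$ be an abundant closed subgroup of a profinite group $F$. Then for each $s \in \mathbb{N}$ there exist open subgroups $E_1 \leq E$ of $F$ containing $M$ such that $(F:E) \geq s \cdot (E:E_1)!$ and $(E:E_1) \geq 3$. -/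
open Subgroup Pointwise

lemma exists_big_index {F : Type*} [Group F] [TopologicalSpace F]
    [IsTopologicalGroup F] [CompactSpace F] [T2Space F] [TotallyDisconnectedSpace F]
    (M : Subgroup F) (hMclosed : IsClosed (M : Set F)) (hM0 : M.index = 0) (n : ℕ) :
    ∃ K : Subgroup F, IsOpen (K : Set F) ∧ M ≤ K ∧ n ≤ K.index := by
  by_contra h
  push_neg at h
  -- all open subgroups containing M have index < n
  set S : Set ℕ := {i | ∃ K : Subgroup F, IsOpen (K : Set F) ∧ M ≤ K ∧ K.index = i} with hS
  have hne : S.Nonempty := ⟨(⊤ : Subgroup F).index, ⊤, by simp, le_top, rfl⟩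
  have hbdd : BddAbove S := by
    refine ⟨n, fun i hi => ?_⟩
    obtain ⟨K, hKo, hKM, rfl⟩ := hi
    exact (h K hKo hKM).le
  obtain ⟨K₀, hK₀o, hK₀M, hK₀i⟩ : sSup S ∈ S := Nat.sSup_mem hne hbdd
  have hK₀fin : K₀.index ≠ 0 := by
    have : Finite (F ⧸ K₀) := K₀.quotient_finite_of_isOpen hK₀o
    exact (K₀.finiteIndex_of_finite_quotient).index_ne_zero
  have hmax : ∀ K : Subgroup F, IsOpen (K : Set F) → M ≤ K → K.index ≤ K₀.index := by
    intro K hKo hKM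
    rw [hK₀i]
    exact le_csSup hbdd ⟨K, hKo, hKM, rfl⟩
  -- K₀ ≤ M
  have hK₀leM : K₀ ≤ M := by
    intro x hx
    by_contra hxM
    -- M * x is closed, doesn't contain 1
    have hMx : IsClosed ((fun y => y * x) '' (M : Set F)) :=
      (Homeomorph.mulRight x).isClosedMap _ hMclosed
    have h1 : (1 : F) ∈ ((fun y => y * x) '' (M : Set F))ᶜ := by
      rintro ⟨m, hm, hmx⟩
      have hmx' : m * x = 1 := hmx
      have : m = x⁻¹ := eq_inv_of_mul_eq_one_left hmx'
      exact hxM (by rw [← inv_inv x, ← this]; exact M.inv_mem hm)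
    obtain ⟨W, hWclopen, h1W, hWsub⟩ :=
      compact_exists_isClopen_in_isOpen hMx.isOpen_compl h1
    obtain ⟨V, hV⟩ :=
      IsTopologicalGroup.exist_openNormalSubgroup_sub_clopen_nhds_of_one hWclopen h1W
    set N := M ⊔ V.toSubgroup
    have hNo : IsOpen (N : Set F) := Subgroup.isOpen_mono le_sup_right V.isOpen
    have hxN : x ∉ N := by
      intro hxN
      have : x ∈ (M : Set F) * (V.toSubgroup : Set F) := by
        rwa [← Subgroup.mul_normal M V.toSubgroup]
      obtain ⟨m, hm, v, hv, hmv⟩ := this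
      have : v ∈ ((fun y => y * x) '' (M : Set F))ᶜ := hWsub (hV hv)
      exact this ⟨m⁻¹, M.inv_mem hm, by rw [← hmv]; group⟩
    -- K₀ ≤ N
    have hKN : K₀ ⊓ N ≤ K₀ := inf_le_left
    have hio : IsOpen ((K₀ ⊓ N : Subgroup F) : Set F) := by
      rw [Subgroup.coe_inf]; exact hK₀o.inter hNo
    have hifin : (K₀ ⊓ N).index ≠ 0 := by
      have : Finite (F ⧸ (K₀ ⊓ N)) := Subgroup.quotient_finite_of_isOpen _ hio
      exact (Subgroup.finiteIndex_of_finite_quotient (H := K₀ ⊓ N)).index_ne_zero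
    have hile : (K₀ ⊓ N).index ≤ K₀.index := hmax _ hio (le_inf hK₀M le_sup_left)
    have hdvd : K₀.index ∣ (K₀ ⊓ N).index := Subgroup.index_dvd_of_le hKN
    have heq : (K₀ ⊓ N).index = K₀.index := le_antisymm hile (Nat.le_of_dvd (Nat.pos_of_ne_zero hifin) hdvd)
    have hrel : (K₀ ⊓ N).relIndex K₀ * K₀.index = K₀.index := by
      rw [Subgroup.relIndex_mul_index hKN, heq]
    have : (K₀ ⊓ N).relIndex K₀ = 1 := by
      have h1k : (1 : ℕ) * K₀.index = K₀.index := one_mul _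
      exact Nat.eq_of_mul_eq_mul_right (Nat.pos_of_ne_zero hK₀fin) (hrel.trans h1k.symm)
    have hK₀le : K₀ ≤ K₀ ⊓ N := Subgroup.relIndex_eq_one.mp this
    exact hxN ((hK₀le.trans inf_le_right) hx)
  have : M.index ∣ K₀.index := Subgroup.index_dvd_of_le hK₀leM
  rw [hM0] at this
  exact hK₀fin (Nat.eq_zero_of_zero_dvd this)
/-- A closed subgroup `M` of `F` of infinite index which is not sparse is abundant. -/
def IsAbundant {F : Type*} [Group F] [TopologicalSpace F] (M : Subgroup F) : Prop :=
  M.index = 0 ∧ ¬ IsSparse M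
/-- Lemma 2.5: if `M` is an abundant closed subgroup of a profinite group `F`, then for
each `s ∈ ℕ` there are open subgroups `E₁ ≤ E` of `F` containing `M` with
`(F : E) ≥ s · (E : E₁)!` and `(E : E₁) ≥ 3`. -/
theorem abundant_subgroup_lemma (F : Type*) [Group F] [TopologicalSpace F]
    [IsTopologicalGroup F] [CompactSpace F] [T2Space F] [TotallyDisconnectedSpace F]
    (M : Subgroup F) (hMclosed : IsClosed (M : Set F)) (hMabundant : IsAbundant M)
    (s : ℕ) :
    ∃ E E₁ : Subgroup F, IsOpen (E : Set F) ∧ IsOpen (E₁ : Set F) ∧ E₁ ≤ E ∧ M ≤ E₁ ∧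
      s * Nat.factorial (E₁.relIndex E) ≤ E.index ∧ 3 ≤ E₁.relIndex E := by
  obtain ⟨hM0, hns⟩ := hMabundant
  rw [IsSparse] at hns
  push_neg at hns
  obtain ⟨m₀, n₀, hdesc⟩ := hns
  -- a fact: any open subgroup has nonzero index
  have hfin : ∀ K : Subgroup F, IsOpen (K : Set F) → K.index ≠ 0 := by
    intro K hKo
    have : Finite (F ⧸ K) := K.quotient_finite_of_isOpen hKo
    exact (K.finiteIndex_of_finite_quotient).index_ne_zero
  -- descending step facts
  have hstep : ∀ K : Subgroup F, IsOpen (K : Set F) → M ≤ K → m₀ ≤ K.index →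
      ∃ L : Subgroup F, IsOpen (L : Set F) ∧ M ≤ L ∧ L ≤ K ∧
        2 ≤ L.relIndex K ∧ L.relIndex K < n₀ ∧ K.index ≤ L.index := by
    intro K hKo hKM hKi
    obtain ⟨L, hLo, hLM, hLK, hLn⟩ := hdesc K hKo hKM hKi
    have hLfin : L.index ≠ 0 := hfin L hLo
    have hr0 : L.relIndex K ≠ 0 := by
      intro h0
      have := Subgroup.relIndex_mul_index hLK.le
      rw [h0, zero_mul] at this
      exact hLfin this.symm
    have hr1 : L.relIndex K ≠ 1 := by
      intro h1
      exact hLK.ne (le_antisymm hLK.le (Subgroup.relIndex_eq_one.mp h1))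
    have h2 : 2 ≤ L.relIndex K := by omega
    have hle : K.index ≤ L.index :=
      Nat.le_of_dvd (Nat.pos_of_ne_zero hLfin) (Subgroup.index_dvd_of_le hLK.le)
    exact ⟨L, hLo, hLM, hLK.le, h2, hLn, hle⟩
  -- start with a large open subgroup
  obtain ⟨K, hKo, hKM, hKi⟩ := exists_big_index M hMclosed hM0 (max m₀ (s * Nat.factorial (n₀ * n₀)))
  obtain ⟨L₁, hL₁o, hL₁M, hL₁K, hr₁2, hr₁n, hi₁⟩ :=
    hstep K hKo hKM (le_trans (le_max_left _ _) hKi)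
  obtain ⟨L₂, hL₂o, hL₂M, hL₂L₁, hr₂2, hr₂n, hi₂⟩ :=
    hstep L₁ hL₁o hL₁M (le_trans (le_trans (le_max_left _ _) hKi) hi₁)
  refine ⟨K, L₂, hKo, hL₂o, hL₂L₁.trans hL₁K, hL₂M, ?_, ?_⟩
  · have hrel : L₂.relIndex L₁ * L₁.relIndex K = L₂.relIndex K :=
      Subgroup.relIndex_mul_relIndex L₂ L₁ K hL₂L₁ hL₁K
    have hle : L₂.relIndex K ≤ n₀ * n₀ := by
      rw [← hrel]; exact Nat.mul_le_mul hr₂n.le hr₁n.le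
    calc s * Nat.factorial (L₂.relIndex K) ≤ s * Nat.factorial (n₀ * n₀) :=
          Nat.mul_le_mul_left s (Nat.factorial_le hle)
      _ ≤ K.index := le_trans (le_max_right _ _) hKi
  · have hrel : L₂.relIndex L₁ * L₁.relIndex K = L₂.relIndex K :=
      Subgroup.relIndex_mul_relIndex L₂ L₁ K hL₂L₁ hL₁K
    rw [← hrel]
    calc (3:ℕ) ≤ 2 * 2 := by norm_num
      _ ≤ _ := Nat.mul_le_mul hr₂2 hr₁2
end

section
/- Let $F = \prod_p \mathbb{Z}/p\mathbb{Z}$, the direct product over all prime numbers $p$ of the cyclic groups of order $p$, regarded as a profinite group. Then the trivial subgroup $\{1\}$ is sparse in $F$. -/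
/-- Restriction homomorphism to a finite set of coordinates. -/
def resHom (s : Finset Nat.Primes) :
    (∀ p : Nat.Primes, Multiplicative (ZMod p)) →* (∀ q : s, Multiplicative (ZMod (q : Nat.Primes))) where
  toFun x q := x q
  map_one' := rfl
  map_mul' _ _ := rfl

lemma resHom_surjective (s : Finset Nat.Primes) : Function.Surjective (resHom s) := by
  intro y
  classical
  refine ⟨fun p => if h : p ∈ s then y ⟨p, h⟩ else 1, funext fun q => ?_⟩
  simp [resHom, q.2]

lemma mem_ker_resHom {s : Finset Nat.Primes} {x : ∀ p : Nat.Primes, Multiplicative (ZMod p)} :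
    x ∈ (resHom s).ker ↔ ∀ q ∈ s, x q = 1 := by
  simp only [MonoidHom.mem_ker, resHom, MonoidHom.coe_mk, OneHom.coe_mk, funext_iff]
  constructor
  · intro h q hq; exact h ⟨q, hq⟩
  · intro h q; exact h q q.2

lemma isOpen_ker_resHom (s : Finset Nat.Primes) : IsOpen ((resHom s).ker : Set (∀ p : Nat.Primes, Multiplicative (ZMod p))) := by
  have : ((resHom s).ker : Set (∀ p : Nat.Primes, Multiplicative (ZMod p)))
      = ⋂ q ∈ s, (fun x : ∀ p : Nat.Primes, Multiplicative (ZMod p) => x q) ⁻¹' {1} := by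
    ext x
    simp only [SetLike.mem_coe, Set.mem_iInter, Set.mem_preimage, Set.mem_singleton_iff]
    exact mem_ker_resHom
  rw [this]
  exact isOpen_biInter_finset fun q _ =>
    (isOpen_discrete ({1} : Set (Multiplicative (ZMod q)))).preimage (continuous_apply q)

lemma index_ker_resHom (s : Finset Nat.Primes) :
    (resHom s).ker.index = ∏ q ∈ s, (q : ℕ) := by
  rw [Subgroup.index_ker, MonoidHom.range_eq_top.mpr (resHom_surjective s),
    Nat.card_congr (Subgroup.topEquiv).toEquiv]
  have : Nat.card (∀ q : s, Multiplicative (ZMod (q : Nat.Primes))) = ∏ q : s, ((q : Nat.Primes) : ℕ) := by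
    rw [Nat.card_pi]
    exact Finset.prod_congr rfl fun q _ => Nat.card_zmod _
  rw [this, ← Finset.prod_attach s (fun q => ((q : Nat.Primes) : ℕ))]
  rfl

/-- In `F = ∏_p ℤ/pℤ`, the product over all primes `p` of the cyclic groups of order
`p` (a profinite group with the product topology), the trivial subgroup is sparse. -/
theorem trivial_subgroup_sparse_in_prod_zmod :
    IsSparse (⊥ : Subgroup (∀ p : Nat.Primes, Multiplicative (ZMod p))) := by
  classical
  intro m n
  obtain ⟨p, hpm, hp⟩ := Nat.exists_infinite_primes m
  set P : Nat.Primes := ⟨p, hp⟩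
  set s : Finset Nat.Primes := insert P ((Nat.primesBelow n).subtype Nat.Prime) with hs
  refine ⟨(resHom s).ker, isOpen_ker_resHom s, bot_le, ?_, ?_⟩
  · rw [index_ker_resHom]
    calc m ≤ p := hpm
    _ = (P : ℕ) := rfl
    _ ≤ ∏ q ∈ s, (q : ℕ) :=
        Finset.single_le_prod' (fun q _ => q.2.one_lt.le.trans' (by norm_num)) (Finset.mem_insert_self _ _)
  · intro L hL _ hLK
    -- L is open, so it contains a basic open subgroup
    obtain ⟨T, u, hu, hTu⟩ := isOpen_pi_iff.mp hL 1 L.one_mem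
    -- the subgroup of elements trivial on T
    set V := (resHom T).ker with hV
    have hVL : V ≤ L := by
      intro x hx
      apply hTu
      intro q hq
      have : x q = 1 := mem_ker_resHom.mp hx q hq
      rw [this]
      exact (hu q hq).2
    -- relIndex L K divides relIndex of (V ⊓ K) in K
    have h1 : L.relIndex (resHom s).ker ∣ (V ⊓ (resHom s).ker).relIndex (resHom s).ker :=
      Subgroup.relIndex_dvd_of_le_left _ (le_trans inf_le_left hVL)
    -- compute a divisor of the latter via the restriction to T \ s
    set K := (resHom s).ker with hK
    set ψ := (resHom (T \ s)).comp K.subtype with hψ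
    have hker : ψ.ker ≤ (V ⊓ K).subgroupOf K := by
      intro x hx
      have hx' : ∀ q ∈ T \ s, (x : ∀ p : Nat.Primes, Multiplicative (ZMod p)) q = 1 := by
        intro q hq
        exact mem_ker_resHom.mp hx q hq
      refine Subgroup.mem_subgroupOf.mpr ⟨?_, x.2⟩
      refine mem_ker_resHom.mpr fun q hq => ?_
      by_cases hqs : q ∈ s
      · exact mem_ker_resHom.mp x.2 q hqs
      · exact hx' q (Finset.mem_sdiff.mpr ⟨hq, hqs⟩)
    have h2 : (V ⊓ K).relIndex K ∣ ∏ q ∈ T \ s, (q : ℕ) := by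
      have d1 : ((V ⊓ K).subgroupOf K).index ∣ ψ.ker.index :=
        Subgroup.index_dvd_of_le hker
      have d2 : ψ.ker.index ∣ ∏ q ∈ T \ s, (q : ℕ) := by
        rw [Subgroup.index_ker]
        have := Subgroup.card_subgroup_dvd_card ψ.range
        have hcard : Nat.card (∀ q : (T \ s : Finset Nat.Primes), Multiplicative (ZMod (q : Nat.Primes)))
            = ∏ q ∈ T \ s, (q : ℕ) := by
          rw [Nat.card_pi]
          rw [← Finset.prod_attach (T \ s) (fun q => ((q : Nat.Primes) : ℕ))]
          exact Finset.prod_congr rfl fun q _ => Nat.card_zmod _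
        rwa [hcard] at this
      exact d1.trans d2
    have hdvd : L.relIndex K ∣ ∏ q ∈ T \ s, (q : ℕ) := h1.trans h2
    set d := L.relIndex K with hd
    have hQpos : 0 < ∏ q ∈ T \ s, (q : ℕ) :=
      Finset.prod_pos fun q _ => q.2.pos
    have hdpos : 0 < d := Nat.pos_of_dvd_of_pos hdvd hQpos
    have hdne1 : d ≠ 1 := by
      intro h
      exact hLK.not_ge (Subgroup.relIndex_eq_one.mp h)
    -- the minimal prime factor of d is a prime in T \ s, hence ≥ n
    have hr : d.minFac.Prime := Nat.minFac_prime hdne1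
    have hrdvd : d.minFac ∣ ∏ q ∈ T \ s, (q : ℕ) := (Nat.minFac_dvd d).trans hdvd
    obtain ⟨q, hq, hqd⟩ := hr.prime.exists_mem_finset_dvd hrdvd
    have hq' : d.minFac = (q : ℕ) := (Nat.prime_dvd_prime_iff_eq hr q.2).mp hqd
    have hqn : n ≤ (q : ℕ) := by
      by_contra hlt
      push_neg at hlt
      have : q ∈ s := by
        rw [hs]
        exact Finset.mem_insert_of_mem (Finset.mem_subtype.mpr (Nat.mem_primesBelow.mpr ⟨hlt, q.2⟩))
      exact (Finset.mem_sdiff.mp hq).2 this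
    calc n ≤ (q : ℕ) := hqn
    _ = d.minFac := hq'.symm
    _ ≤ d := Nat.minFac_le hdpos
end

section
/- Let $\mathcal{C}$ be a Melnikov formation of finite groups, let $\hat F$ be a free profinite group of finite rank $e \geq 2$, and let $\hat N = M_{\hat F}(\mathcal{C})$ be the intersection of all open normal subgroups $K$ of $\hat F$ with $\hat F / K \in \mathcal{C}$. Let $\hat M$ be a closed subgroup of $\hat F$ containing $\hat N$ such that $\hat M / \hat N$ is a pro-$\mathcal{C}$ group. Then $\hat N = M_{\hat M}(\mathcal{C})$, i.e., $\hat N$ equals the intersection of all open normal subgroups $L$ of $\hat M$ with $\hat M / L \in \mathcal{C}$. -/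
/-- A Melnikov formation: a family of finite groups closed under taking quotients,
normal subgroups, and extensions. -/
structure MelnikovFormation where
  /-- membership of a (finite) group in the family -/
  mem : ∀ (G : Type) [Group G], Prop
  finite_of_mem : ∀ (G : Type) [Group G], mem G → Finite G
  iso_closed : ∀ (G H : Type) [Group G] [Group H], (G ≃* H) → mem G → mem H
  quotient_closed : ∀ (G : Type) [Group G] (N : Subgroup G) [N.Normal],
    mem G → mem (G ⧸ N)
  normal_closed : ∀ (G : Type) [Group G] (N : Subgroup G) [N.Normal],
    mem G → mem N
  extension_closed : ∀ (G : Type) [Group G] (N : Subgroup G) [N.Normal],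
    mem N → mem (G ⧸ N) → mem G

/-- A topological group is a pro-`𝓒` group if it is profinite and all of its quotients by
open normal subgroups lie in `𝓒`. -/
def IsProC (𝓒 : MelnikovFormation) (G : Type) [Group G] [TopologicalSpace G] : Prop :=
  (CompactSpace G ∧ T2Space G ∧ TotallyDisconnectedSpace G ∧ IsTopologicalGroup G) ∧
  ∀ (U : Subgroup G) [U.Normal], IsOpen (U : Set G) → 𝓒.mem (G ⧸ U)

/-- `F` is a free pro-`𝓒` group of finite rank `e`. -/
def IsFreeProCOfRank (𝓒 : MelnikovFormation) (F : Type) [Group F] [TopologicalSpace F]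
    (e : ℕ) : Prop :=
  IsProC 𝓒 F ∧
  ∃ x : Fin e → F,
    closure (Subgroup.closure (Set.range x) : Set F) = Set.univ ∧
    ∀ (H : Type) [Group H], 𝓒.mem H → ∀ f : Fin e → H,
      ∃! φ : F →* H, @Continuous F H _ ⊥ (φ : F → H) ∧ ∀ i, φ (x i) = f i

/-- `F` is a free pro-`𝓒` group of countably infinite rank `ω`. -/
def IsFreeProCCountableRank (𝓒 : MelnikovFormation) (F : Type) [Group F]
    [TopologicalSpace F] : Prop :=
  IsProC 𝓒 F ∧
  ∃ x : ℕ → F,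
    Filter.Tendsto x Filter.atTop (nhds 1) ∧
    closure (Subgroup.closure (Set.range x) : Set F) = Set.univ ∧
    ∀ (H : Type) [Group H], 𝓒.mem H → ∀ f : ℕ → H,
      (∀ᶠ n in Filter.atTop, f n = 1) →
      ∃! φ : F →* H, @Continuous F H _ ⊥ (φ : F → H) ∧ ∀ n, φ (x n) = f n

/-- `M_G(𝓒)`: the intersection of all open normal subgroups `K` of `G` with `G/K ∈ 𝓒`. -/
def formationKernel (𝓒 : MelnikovFormation) (G : Type) [Group G] [TopologicalSpace G] :
    Subgroup G :=
  ⨅ (K : Subgroup G) (h : K.Normal) (_ : IsOpen (K : Set G))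
    (_ : letI := h; 𝓒.mem (G ⧸ K)), K

/-- `F` is a free profinite group of finite rank `e`. -/
def IsFreeProfiniteOfRank (F : Type) [Group F] [TopologicalSpace F] (e : ℕ) : Prop :=
  CompactSpace F ∧ T2Space F ∧ TotallyDisconnectedSpace F ∧ IsTopologicalGroup F ∧
    ∃ x : Fin e → F,
      closure (Subgroup.closure (Set.range x) : Set F) = Set.univ ∧
      ∀ (H : Type) [Group H] [Finite H] (f : Fin e → H),
        ∃! φ : F →* H, @Continuous F H _ ⊥ (φ : F → H) ∧ ∀ i, φ (x i) = f i

open scoped Pointwise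

section Aux
variable (𝓒 : MelnikovFormation)

lemma mem_formationKernel_iff {G : Type} [Group G] [TopologicalSpace G] {x : G} :
    x ∈ formationKernel 𝓒 G ↔ ∀ (K : Subgroup G) (h : K.Normal), IsOpen (K : Set G) →
      (letI := h; 𝓒.mem (G ⧸ K)) → x ∈ K := by
  simp [formationKernel, Subgroup.mem_iInf]

lemma mem_of_subsingleton {G H : Type} [Group G] [Group H] [Subsingleton G] [Subsingleton H]
    (hG : 𝓒.mem G) : 𝓒.mem H :=
  𝓒.iso_closed G H
    ⟨⟨fun _ => 1, fun _ => 1, fun _ => Subsingleton.elim _ _, fun _ => Subsingleton.elim _ _⟩,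
      fun _ _ => Subsingleton.elim _ _⟩ hG

/-- first isomorphism theorem plumbing: `A / (W ⊓ A)` is isomorphic to the image of `A`
in `G / W`. -/
noncomputable def quotSubgroupOfEquivMap {G : Type} [Group G] (A W : Subgroup G) [W.Normal] :
    (↥A ⧸ (W.subgroupOf A)) ≃* ↥(A.map (QuotientGroup.mk' W)) := by
  have hker : ((QuotientGroup.mk' W).comp A.subtype).ker = W.subgroupOf A := by
    rw [← MonoidHom.comap_ker, QuotientGroup.ker_mk']; rfl
  have hrange : ((QuotientGroup.mk' W).comp A.subtype).range = A.map (QuotientGroup.mk' W) := by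
    rw [MonoidHom.range_comp, Subgroup.range_subtype]
  exact (QuotientGroup.quotientMulEquivOfEq hker.symm).trans
    ((QuotientGroup.quotientKerEquivRange _).trans (MulEquiv.subgroupCongr hrange))

lemma mem_quotient_subgroupOf {G : Type} [Group G] (A W : Subgroup G)
    [A.Normal] [W.Normal] (h : 𝓒.mem (G ⧸ W)) : 𝓒.mem (↥A ⧸ (W.subgroupOf A)) := by
  haveI : (A.map (QuotientGroup.mk' W)).Normal :=
    Subgroup.Normal.map ‹A.Normal› _ (QuotientGroup.mk'_surjective W)
  exact 𝓒.iso_closed _ _ (quotSubgroupOfEquivMap A W).symm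
    (𝓒.normal_closed (G ⧸ W) (A.map (QuotientGroup.mk' W)) h)

lemma mem_quotient_of_le {G : Type} [Group G] {A B : Subgroup G} (hAB : A ≤ B)
    [A.Normal] [B.Normal] (h : 𝓒.mem (G ⧸ A)) : 𝓒.mem (G ⧸ B) := by
  haveI : (B.map (QuotientGroup.mk' A)).Normal :=
    Subgroup.Normal.map ‹B.Normal› _ (QuotientGroup.mk'_surjective A)
  exact 𝓒.iso_closed _ _ (QuotientGroup.quotientQuotientEquivQuotient A B hAB)
    (𝓒.quotient_closed (G ⧸ A) (B.map (QuotientGroup.mk' A)) h)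

lemma mem_quotient_inf {G : Type} [Group G] {A B : Subgroup G} [A.Normal] [B.Normal]
    (hA : 𝓒.mem (G ⧸ A)) (hB : 𝓒.mem (G ⧸ B)) : 𝓒.mem (G ⧸ (A ⊓ B)) := by
  have hBA : B.subgroupOf A = (A ⊓ B).subgroupOf A := by
    ext x; simp [Subgroup.mem_subgroupOf, x.2]
  have hmemq : 𝓒.mem (↥A ⧸ ((A ⊓ B).subgroupOf A)) :=
    𝓒.iso_closed _ _ (QuotientGroup.quotientMulEquivOfEq hBA) (mem_quotient_subgroupOf 𝓒 A B hB)
  haveI : (A.map (QuotientGroup.mk' (A ⊓ B))).Normal :=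
    Subgroup.Normal.map ‹A.Normal› _ (QuotientGroup.mk'_surjective _)
  refine 𝓒.extension_closed (G ⧸ (A ⊓ B)) (A.map (QuotientGroup.mk' (A ⊓ B))) ?_ ?_
  · exact 𝓒.iso_closed _ _ (quotSubgroupOfEquivMap A (A ⊓ B)) hmemq
  · exact 𝓒.iso_closed _ _
      (QuotientGroup.quotientQuotientEquivQuotient (A ⊓ B) A inf_le_left).symm hA


lemma mem_quotient_of_formationKernel_le {G : Type} [Group G] [TopologicalSpace G]
    [IsTopologicalGroup G] [CompactSpace G] (htriv : 𝓒.mem PUnit)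
    (V : Subgroup G) [hV : V.Normal] (hVopen : IsOpen (V : Set G))
    (hle : formationKernel 𝓒 G ≤ V) : 𝓒.mem (G ⧸ V) := by
  classical
  set ι := {K : Subgroup G // ∃ h : K.Normal, IsOpen (K : Set G) ∧ (letI := h; 𝓒.mem (G ⧸ K))}
    with hι
  have hcover : ((V : Set G)ᶜ) ⊆ ⋃ i : ι, (((i.1 : Subgroup G) : Set G)ᶜ) := by
    intro x hx
    have hxf : x ∉ formationKernel 𝓒 G := fun hxf => hx (hle hxf)
    rw [mem_formationKernel_iff] at hxf
    push_neg at hxf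
    obtain ⟨K, hn, ho, hm, hxK⟩ := hxf
    exact Set.mem_iUnion.2 ⟨⟨K, hn, ho, hm⟩, hxK⟩
  have hcompact : IsCompact ((V : Set G)ᶜ) := (hVopen.isClosed_compl).isCompact
  obtain ⟨t, ht⟩ := hcompact.elim_finite_subcover (fun i : ι => (((i.1 : Subgroup G) : Set G)ᶜ))
    (fun i => by
      obtain ⟨h, ho, _⟩ := i.2
      exact (Subgroup.isClosed_of_isOpen _ ho).isOpen_compl) hcover
  have key : ∀ s : Finset ι, ∃ K : Subgroup G, ∃ h : K.Normal, IsOpen (K : Set G) ∧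
      (letI := h; 𝓒.mem (G ⧸ K)) ∧ ∀ i ∈ s, K ≤ (i.1 : Subgroup G) := by
    intro s
    induction s using Finset.induction_on with
    | empty =>
      refine ⟨⊤, inferInstance, ?_, ?_, by simp⟩
      · rw [Subgroup.coe_top]; exact isOpen_univ
      · haveI := QuotientGroup.subsingleton_quotient_top (G := G)
        exact mem_of_subsingleton 𝓒 htriv
    | @insert a s ha ih =>
      obtain ⟨K, hn, ho, hm, hles⟩ := ih
      obtain ⟨hna, hoa, hma⟩ := a.2
      haveI := hna; haveI := hn
      refine ⟨(a.1 : Subgroup G) ⊓ K, Subgroup.normal_inf_normal _ _, ?_, ?_, ?_⟩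
      · rw [Subgroup.coe_inf]; exact hoa.inter ho
      · exact mem_quotient_inf 𝓒 hma hm
      · intro i hi
        rcases Finset.mem_insert.1 hi with h | h
        · exact h ▸ inf_le_left
        · exact inf_le_right.trans (hles i h)
  obtain ⟨K, hn, ho, hm, hles⟩ := key t
  haveI := hn
  refine mem_quotient_of_le 𝓒 ?_ hm
  intro x hx
  by_contra hxV
  obtain ⟨i, hit, hxi⟩ := Set.mem_iUnion₂.1 (ht hxV)
  exact hxi (hles i hit hx)

lemma exists_openNormal_in_nhd {G : Type} [Group G] [TopologicalSpace G] [CompactSpace G]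
    [T2Space G] [TotallyDisconnectedSpace G] [IsTopologicalGroup G] {U : Set G}
    (hU : IsOpen U) (h1 : (1 : G) ∈ U) :
    ∃ V : Subgroup G, V.Normal ∧ IsOpen (V : Set G) ∧ (V : Set G) ⊆ U := by
  obtain ⟨W, hW, h1W, hWU⟩ := compact_exists_isClopen_in_isOpen hU h1
  obtain ⟨H, hH⟩ := IsTopologicalGroup.exist_openNormalSubgroup_sub_clopen_nhds_of_one hW h1W
  exact ⟨H.toOpenSubgroup.toSubgroup, H.isNormal', H.toOpenSubgroup.isOpen, hH.trans hWU⟩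

lemma eq_one_of_mem_openNormals {G : Type} [Group G] [TopologicalSpace G] [CompactSpace G]
    [T2Space G] [TotallyDisconnectedSpace G] [IsTopologicalGroup G] {x : G}
    (h : ∀ V : Subgroup G, V.Normal → IsOpen (V : Set G) → x ∈ V) : x = 1 := by
  by_contra hx
  have hU : IsOpen ({x}ᶜ : Set G) := isClosed_singleton.isOpen_compl
  have h1 : (1 : G) ∈ ({x}ᶜ : Set G) := by
    simp only [Set.mem_compl_iff, Set.mem_singleton_iff]
    exact fun e => hx e.symm
  obtain ⟨V, hn, ho, hsub⟩ := exists_openNormal_in_nhd hU h1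
  exact hsub (h V hn ho) rfl

lemma isClosed_formationKernel {G : Type} [Group G] [TopologicalSpace G] [IsTopologicalGroup G] :
    IsClosed ((formationKernel 𝓒 G : Subgroup G) : Set G) := by
  have hset : ((formationKernel 𝓒 G : Subgroup G) : Set G) =
      ⋂ (K : Subgroup G) (h : K.Normal) (_ : IsOpen (K : Set G))
        (_ : letI := h; 𝓒.mem (G ⧸ K)), (K : Set G) := by
    ext x
    simp only [SetLike.mem_coe, Set.mem_iInter, mem_formationKernel_iff]
  rw [hset]
  exact isClosed_iInter fun K => isClosed_iInter fun h => isClosed_iInter fun ho =>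
    isClosed_iInter fun _ => Subgroup.isClosed_of_isOpen _ ho

lemma formationKernel_le_comap_equiv {G : Type} [Group G] [TopologicalSpace G]
    (e : G ≃* G) (he : Continuous e) :
    formationKernel 𝓒 G ≤ (formationKernel 𝓒 G).comap e.toMonoidHom := by
  intro x hx
  rw [Subgroup.mem_comap, mem_formationKernel_iff]
  rw [mem_formationKernel_iff] at hx
  intro K hn ho hm
  haveI := hn
  haveI hn' : (K.comap e.toMonoidHom).Normal := hn.comap _
  have ho' : IsOpen ((K.comap e.toMonoidHom : Subgroup G) : Set G) := ho.preimage he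
  have hmap : (K.comap e.toMonoidHom).map e.toMonoidHom = K :=
    Subgroup.map_comap_eq_self_of_surjective e.surjective K
  have hm' : 𝓒.mem (G ⧸ K.comap e.toMonoidHom) :=
    𝓒.iso_closed _ _ (QuotientGroup.congr _ _ e hmap).symm hm
  exact hx _ hn' ho' hm'

end Aux

/-- The key step of Theorem 3.1: let `F̂` be a free profinite group of finite rank
`e ≥ 2`, `N̂ = M_F̂(𝓒)`, and `M̂` a closed subgroup of `F̂` containing `N̂` such that
`M̂/N̂` is a pro-`𝓒` group. Then `N̂ = M_M̂(𝓒)`. -/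
theorem formationKernel_of_subgroup (𝓒 : MelnikovFormation)
    (F : Type) [Group F] [TopologicalSpace F]
    (e : ℕ) (he : 2 ≤ e) (hF : IsFreeProfiniteOfRank F e)
    (M : Subgroup F) (hMclosed : IsClosed (M : Set F))
    (hNM : formationKernel 𝓒 F ≤ M)
    [hnorm : ((formationKernel 𝓒 F).subgroupOf M).Normal]
    (hquot : IsProC 𝓒 (↥M ⧸ (formationKernel 𝓒 F).subgroupOf M)) :
    (formationKernel 𝓒 F).subgroupOf M = formationKernel 𝓒 ↥M := by
  classical
  obtain ⟨hFc, hFt2, hFtd, hFtg, -⟩ := hF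
  haveI := hFc; haveI := hFt2; haveI := hFtd; haveI := hFtg
  obtain ⟨⟨hQc, hQt2, hQtd, hQtg⟩, hQmem⟩ := hquot
  set N := formationKernel 𝓒 F with hN
  haveI : CompactSpace ↥M := isCompact_iff_compactSpace.1 (hMclosed.isCompact)
  -- 𝓒 contains the trivial group
  have htriv : 𝓒.mem PUnit := by
    have h1 : 𝓒.mem ((↥M ⧸ N.subgroupOf M) ⧸ (⊤ : Subgroup _)) :=
      hQmem ⊤ (by rw [Subgroup.coe_top]; exact isOpen_univ)
    haveI : Subsingleton ((↥M ⧸ N.subgroupOf M) ⧸ (⊤ : Subgroup _)) :=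
      QuotientGroup.subsingleton_quotient_top
    exact mem_of_subsingleton 𝓒 h1
  -- N is normal in F
  haveI hNnormal : N.Normal := by
    constructor
    intro n hn g
    rw [hN, mem_formationKernel_iff] at hn ⊢
    intro K h ho hm
    exact h.conj_mem n (hn K h ho hm) g
  have hNclosed : IsClosed (N : Set F) := isClosed_formationKernel 𝓒
  haveI : CompactSpace ↥N := isCompact_iff_compactSpace.1 (hNclosed.isCompact)
  -- direction 2 : formationKernel 𝓒 ↥M ≤ N.subgroupOf M
  have dir2 : formationKernel 𝓒 ↥M ≤ N.subgroupOf M := by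
    intro x hx
    haveI := hQc; haveI := hQt2; haveI := hQtd; haveI := hQtg
    have hx1 : QuotientGroup.mk' (N.subgroupOf M) x = 1 := by
      apply eq_one_of_mem_openNormals
      intro U hUn hUo
      haveI := hUn
      set φ := (QuotientGroup.mk' U).comp (QuotientGroup.mk' (N.subgroupOf M)) with hφ
      have hker : φ.ker = U.comap (QuotientGroup.mk' (N.subgroupOf M)) := by
        rw [hφ, ← MonoidHom.comap_ker, QuotientGroup.ker_mk']
      have hsurj : Function.Surjective φ :=
        (QuotientGroup.mk'_surjective U).comp (QuotientGroup.mk'_surjective _)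
      have hmem : 𝓒.mem (↥M ⧸ φ.ker) :=
        𝓒.iso_closed _ _ (QuotientGroup.quotientKerEquivOfSurjective φ hsurj).symm
          (hQmem U hUo)
      have hopen : IsOpen ((φ.ker : Subgroup ↥M) : Set ↥M) := by
        rw [hker, Subgroup.coe_comap]
        exact hUo.preimage QuotientGroup.continuous_mk
      rw [mem_formationKernel_iff] at hx
      have hxk : x ∈ φ.ker := hx φ.ker inferInstance hopen hmem
      rw [hker, Subgroup.mem_comap] at hxk
      exact hxk
    exact (QuotientGroup.eq_one_iff x).1 hx1
  -- key fact: the formation kernel of N is all of N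
  have hNtop : formationKernel 𝓒 ↥N = ⊤ := by
    set P : Subgroup F := (formationKernel 𝓒 ↥N).map N.subtype with hP
    have hPN : P ≤ N := by
      rintro _ ⟨y, _, rfl⟩
      exact y.2
    have hPcoe : (P : Set F) = Subtype.val '' ((formationKernel 𝓒 ↥N : Subgroup ↥N) : Set ↥N) := by
      rw [hP, Subgroup.coe_map]
      rfl
    have hPclosed : IsClosed (P : Set F) := by
      rw [hPcoe]
      have hemb : Topology.IsClosedEmbedding (Subtype.val : ↥N → F) :=
        hNclosed.isClosedEmbedding_subtypeVal
      exact hemb.isClosedMap _ (isClosed_formationKernel 𝓒)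
    haveI hPnormal : P.Normal := by
      constructor
      rintro _ ⟨y, hy, rfl⟩ g
      have hmem : ∀ n : ↥N, g * ↑n * g⁻¹ ∈ N := fun n => hNnormal.conj_mem _ n.2 g
      have hmem' : ∀ n : ↥N, g⁻¹ * ↑n * g ∈ N := fun n => by
        simpa using hNnormal.conj_mem _ n.2 g⁻¹
      set e : ↥N ≃* ↥N :=
        { toFun := fun n => ⟨g * ↑n * g⁻¹, hmem n⟩
          invFun := fun n => ⟨g⁻¹ * ↑n * g, hmem' n⟩
          left_inv := fun n => Subtype.ext (by simp only []; group)
          right_inv := fun n => Subtype.ext (by simp only []; group)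
          map_mul' := fun a b => Subtype.ext (by
            simp only [Subgroup.coe_mul]
            group) } with he
      have hecont : Continuous e := by
        apply Continuous.subtype_mk
        exact (continuous_const.mul continuous_subtype_val).mul continuous_const
      have := formationKernel_le_comap_equiv 𝓒 e hecont hy
      rw [Subgroup.mem_comap] at this
      exact ⟨e y, this, rfl⟩
    -- every open normal subgroup of F containing P has quotient in 𝓒
    have keyW : ∀ W : Subgroup F, ∀ hWn : W.Normal, IsOpen (W : Set F) → P ≤ W →
        (letI := hWn; 𝓒.mem (F ⧸ W)) := by
      intro W hWn hWo hPW
      haveI := hWn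
      have h1 : 𝓒.mem (↥N ⧸ (W.subgroupOf N)) := by
        apply mem_quotient_of_formationKernel_le 𝓒 htriv (W.subgroupOf N)
        · rw [Subgroup.subgroupOf, Subgroup.coe_comap]
          exact hWo.preimage continuous_subtype_val
        · intro y hy
          rw [Subgroup.subgroupOf, Subgroup.mem_comap]
          exact hPW ⟨y, hy, rfl⟩
      haveI : (N ⊔ W).Normal := Subgroup.sup_normal _ _
      have h2 : 𝓒.mem (F ⧸ (N ⊔ W)) := by
        apply mem_quotient_of_formationKernel_le 𝓒 htriv (N ⊔ W)
          (Subgroup.isOpen_mono le_sup_right hWo)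
        rw [← hN]
        exact le_sup_left
      set S := N.map (QuotientGroup.mk' W) with hS
      haveI hSn : S.Normal := hNnormal.map _ (QuotientGroup.mk'_surjective W)
      haveI : ((N ⊔ W).map (QuotientGroup.mk' W)).Normal :=
        Subgroup.Normal.map inferInstance _ (QuotientGroup.mk'_surjective W)
      refine 𝓒.extension_closed (F ⧸ W) S ?_ ?_
      · exact 𝓒.iso_closed _ _ (quotSubgroupOfEquivMap N W) h1
      · have hmap : S = (N ⊔ W).map (QuotientGroup.mk' W) := by
          rw [Subgroup.map_sup, (Subgroup.map_eq_bot_iff _).2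
            (le_of_eq (QuotientGroup.ker_mk' W).symm), sup_bot_eq]
        have e := ((QuotientGroup.quotientMulEquivOfEq hmap).trans
          (QuotientGroup.quotientQuotientEquivQuotient W (N ⊔ W) le_sup_right))
        exact 𝓒.iso_closed _ _ e.symm h2
    -- conclude N ≤ P
    have hNP : N ≤ P := by
      intro x hxN
      by_contra hxP
      have hUopen : IsOpen ((fun y => x * y) ⁻¹' ((P : Set F)ᶜ)) :=
        (hPclosed.isOpen_compl).preimage (continuous_const.mul continuous_id)
      have h1U : (1 : F) ∈ (fun y => x * y) ⁻¹' ((P : Set F)ᶜ) := by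
        simp only [Set.mem_preimage, mul_one, Set.mem_compl_iff]
        exact fun h => hxP h
      obtain ⟨V, hVn, hVo, hVsub⟩ := exists_openNormal_in_nhd hUopen h1U
      haveI := hVn
      haveI hWn : (P ⊔ V).Normal := Subgroup.sup_normal _ _
      have hWo : IsOpen ((P ⊔ V : Subgroup F) : Set F) := Subgroup.isOpen_mono le_sup_right hVo
      have hFW : 𝓒.mem (F ⧸ (P ⊔ V)) := keyW _ hWn hWo le_sup_left
      have hxW : x ∈ P ⊔ V := by
        rw [hN, mem_formationKernel_iff] at hxN
        exact hxN _ hWn hWo hFW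
      have hxmul : x ∈ (P : Set F) * (V : Set F) := by
        rw [← Subgroup.mul_normal]
        exact hxW
      obtain ⟨p, hp, v, hv, hpv⟩ := hxmul
      have : x * v⁻¹ ∈ (P : Set F)ᶜ := hVsub (V.inv_mem hv)
      apply this
      rw [← hpv]
      simpa using hp
    rw [eq_top_iff]
    intro n _
    obtain ⟨y, hy, hyn⟩ := hNP n.2
    have : y = n := Subtype.ext hyn
    exact this ▸ hy
  -- direction 1
  have dir1 : N.subgroupOf M ≤ formationKernel 𝓒 ↥M := by
    intro x hx
    rw [mem_formationKernel_iff]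
    intro L hLn hLo hLm
    haveI := hLn
    set ι : ↥N →* ↥M := Subgroup.inclusion hNM with hι
    have hιcont : Continuous ι := Continuous.subtype_mk continuous_subtype_val _
    haveI hJn : (L.comap ι).Normal := hLn.comap ι
    have hJo : IsOpen ((L.comap ι : Subgroup ↥N) : Set ↥N) := by
      rw [Subgroup.coe_comap]
      exact hLo.preimage hιcont
    have hJmem : 𝓒.mem (↥N ⧸ L.comap ι) := by
      set φ := (QuotientGroup.mk' L).comp ι with hφ
      have hker : φ.ker = L.comap ι := by
        rw [hφ, ← MonoidHom.comap_ker, QuotientGroup.ker_mk']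
      have hrange : φ.range = (N.subgroupOf M).map (QuotientGroup.mk' L) := by
        rw [hφ, MonoidHom.range_comp, Subgroup.inclusion_range]
      haveI : ((N.subgroupOf M).map (QuotientGroup.mk' L)).Normal :=
        Subgroup.Normal.map inferInstance _ (QuotientGroup.mk'_surjective L)
      have hmemrange : 𝓒.mem ↥((N.subgroupOf M).map (QuotientGroup.mk' L)) :=
        𝓒.normal_closed (↥M ⧸ L) _ hLm
      have e : (↥N ⧸ L.comap ι) ≃* ↥((N.subgroupOf M).map (QuotientGroup.mk' L)) :=
        (QuotientGroup.quotientMulEquivOfEq hker.symm).trans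
          ((QuotientGroup.quotientKerEquivRange φ).trans (MulEquiv.subgroupCongr hrange))
      exact 𝓒.iso_closed _ _ e.symm hmemrange
    have hle : formationKernel 𝓒 ↥N ≤ L.comap ι := by
      intro y hy
      rw [mem_formationKernel_iff] at hy
      exact hy _ hJn hJo hJmem
    rw [hNtop] at hle
    have : ι ⟨↑x, hx⟩ ∈ L := hle (Subgroup.mem_top _)
    have heq : ι ⟨↑x, hx⟩ = x := Subtype.ext rfl
    rwa [heq] at this
  exact le_antisymm dir1 dir2
end
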